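/- Let N ≥ 1 and p ≥ 1 be integers and c > 0. Let X : [−π, π] → ℂ^{N×N} be a continuous matrix-valued function such that for every ω ∈ [−π, π], X(ω) is Hermitian and v* X(ω) v ≥ c² ‖v‖² for all v ∈ ℂ^N. For ℓ ∈ ℤ define C_ℓ := (1/(2π)) ∫_{−π}^{π} X(ω) e^{iωℓ} dω ∈ ℂ^{N×N}. Then for any vectors u_0, u_1, …, u_{p−1} ∈ ℂ^N: Re( Σ_{r=0}^{p−1} Σ_{s=0}^{p−1} u_r* C_{r−s} u_s ) ≥ c² Σ_{r=0}^{p−1} ‖u_r‖². In other words, the Np×Np block-Toeplitz matrix with (r,s) block C_{r−s} has smallest eigenvalue at least c². -/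

import Mathlib

set_option maxHeartbeats 1000000

open Finset Real

/-- The lag-`ℓ` autocovariance matrix `C_ℓ = (1/2π) ∫_{−π}^{π} X(ω) e^{iωℓ} dω`,
defined entrywise. -/
noncomputable def autocov (N : ℕ) (X : ℝ → Matrix (Fin N) (Fin N) ℂ) (ℓ : ℤ) :
    Matrix (Fin N) (Fin N) ℂ :=
  fun i j =>
    (1 / (2 * (π : ℂ))) *
      ∫ ω in (-π)..π, X ω i j * Complex.exp (Complex.I * (ω : ℂ) * (ℓ : ℂ))

lemma stmt13_orth (k : ℤ) :
    (∫ ω in (-π:ℝ)..π, Complex.exp (Complex.I * (ω : ℂ) * (k : ℂ)))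
      = if k = 0 then (2 * π : ℂ) else 0 := by
  by_cases hk : k = 0
  · simp [hk]
    ring
  · have h1 : ∀ ω : ℝ, Complex.I * (ω : ℂ) * (k : ℂ) = (Complex.I * k) * (ω : ℂ) := by
      intro ω; ring
    have hIk : Complex.I * (k : ℂ) ≠ 0 := by
      simp [Complex.I_ne_zero, hk]
    simp only [h1]
    rw [integral_exp_mul_complex hIk]
    have h2 : Complex.exp (Complex.I * k * (π : ℂ))
        = Complex.exp (Complex.I * k * ((-π : ℝ) : ℂ)) := by
      have h3 : Complex.I * k * (π : ℂ)
          = Complex.I * k * ((-π : ℝ) : ℂ) + k * (2 * π * Complex.I) := by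
        push_cast; ring
      rw [h3, Complex.exp_add, Complex.exp_int_mul_two_pi_mul_I, mul_one]
    rw [h2]
    simp [hk]

lemma stmt13_iisum {ι : Type*} [Fintype ι] (f : ι → ℝ → ℂ) (a b : ℝ)
    (h : ∀ i, IntervalIntegrable (f i) MeasureTheory.volume a b) :
    IntervalIntegrable (fun ω => ∑ i, f i ω) MeasureTheory.volume a b := by
  have h2 : (fun ω => ∑ i, f i ω) = ∑ i, f i := by
    funext ω; simp [Finset.sum_apply]
  rw [h2]
  exact IntervalIntegrable.sum Finset.univ (fun i _ => h i)

lemma stmt13_intsum1 {ι : Type*} [Fintype ι] (f : ι → ℝ → ℂ) (a b : ℝ)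
    (h : ∀ i, IntervalIntegrable (f i) MeasureTheory.volume a b) :
    (∫ ω in a..b, ∑ i, f i ω) = ∑ i, ∫ ω in a..b, f i ω :=
  intervalIntegral.integral_finset_sum (fun i _ => h i)

lemma stmt13_intsum3 {α β γ : Type*} [Fintype α] [Fintype β] [Fintype γ]
    (f : α → β → γ → ℝ → ℂ) (a b : ℝ)
    (h : ∀ i j k, IntervalIntegrable (f i j k) MeasureTheory.volume a b) :
    (∫ ω in a..b, ∑ i, ∑ j, ∑ k, f i j k ω)
      = ∑ i, ∑ j, ∑ k, ∫ ω in a..b, f i j k ω := by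
  rw [stmt13_intsum1 (fun i ω => ∑ j, ∑ k, f i j k ω) a b
    (fun i => stmt13_iisum _ a b (fun j => stmt13_iisum _ a b (fun k => h i j k)))]
  refine Finset.sum_congr rfl fun i _ => ?_
  rw [stmt13_intsum1 (fun j ω => ∑ k, f i j k ω) a b
    (fun j => stmt13_iisum _ a b (fun k => h i j k))]
  refine Finset.sum_congr rfl fun j _ => ?_
  exact stmt13_intsum1 (fun k ω => f i j k ω) a b (fun k => h i j k)

lemma stmt13_intsum4 {α β γ δ : Type*} [Fintype α] [Fintype β] [Fintype γ] [Fintype δ]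
    (f : α → β → γ → δ → ℝ → ℂ) (a b : ℝ)
    (h : ∀ i j k l, IntervalIntegrable (f i j k l) MeasureTheory.volume a b) :
    (∫ ω in a..b, ∑ i, ∑ j, ∑ k, ∑ l, f i j k l ω)
      = ∑ i, ∑ j, ∑ k, ∑ l, ∫ ω in a..b, f i j k l ω := by
  rw [stmt13_intsum1 (fun i ω => ∑ j, ∑ k, ∑ l, f i j k l ω) a b
    (fun i => stmt13_iisum _ a b (fun j => stmt13_iisum _ a b
      (fun k => stmt13_iisum _ a b (fun l => h i j k l))))]
  exact Finset.sum_congr rfl fun i _ => stmt13_intsum3 (f i) a b (h i)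

lemma stmt13_swap3 {α β γ : Type*} [Fintype α] [Fintype β] [Fintype γ]
    (t : α → β → γ → ℂ) :
    (∑ i : α, ∑ j : β, ∑ k : γ, t i j k) = ∑ k : γ, ∑ i : α, ∑ j : β, t i j k :=
  calc (∑ i : α, ∑ j : β, ∑ k : γ, t i j k)
      = ∑ i : α, ∑ k : γ, ∑ j : β, t i j k :=
        Finset.sum_congr rfl fun i _ => Finset.sum_comm
    _ = ∑ k : γ, ∑ i : α, ∑ j : β, t i j k := Finset.sum_comm

lemma stmt13_swap4 {α β γ δ : Type*} [Fintype α] [Fintype β] [Fintype γ] [Fintype δ]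
    (t : α → β → γ → δ → ℂ) :
    (∑ r : α, ∑ s : β, ∑ i : γ, ∑ j : δ, t r s i j)
      = ∑ i : γ, ∑ j : δ, ∑ r : α, ∑ s : β, t r s i j :=
  calc (∑ r : α, ∑ s : β, ∑ i : γ, ∑ j : δ, t r s i j)
      = ∑ r : α, ∑ i : γ, ∑ s : β, ∑ j : δ, t r s i j :=
        Finset.sum_congr rfl fun r _ => Finset.sum_comm
    _ = ∑ i : γ, ∑ r : α, ∑ s : β, ∑ j : δ, t r s i j := Finset.sum_comm
    _ = ∑ i : γ, ∑ r : α, ∑ j : δ, ∑ s : β, t r s i j :=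
        Finset.sum_congr rfl fun i _ => Finset.sum_congr rfl fun r _ => Finset.sum_comm
    _ = ∑ i : γ, ∑ j : δ, ∑ r : α, ∑ s : β, t r s i j :=
        Finset.sum_congr rfl fun i _ => Finset.sum_comm

lemma stmt13_exp_split {p : ℕ} (r s : Fin p) (ω : ℝ) :
    Complex.exp (Complex.I * (ω : ℂ) * ((((r : ℤ) - (s : ℤ)) : ℤ) : ℂ))
      = (starRingEnd ℂ) (Complex.exp (-(Complex.I * (ω : ℂ) * (r : ℂ)))) *
          Complex.exp (-(Complex.I * (ω : ℂ) * (s : ℂ))) := by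
  have e2 : (starRingEnd ℂ) (Complex.exp (-(Complex.I * (ω : ℂ) * (r : ℂ))))
      = Complex.exp (Complex.I * (ω : ℂ) * (r : ℂ)) := by
    rw [← Complex.exp_conj]
    congr 1
    simp [Complex.conj_I, Complex.conj_ofReal]
  rw [e2, ← Complex.exp_add]
  congr 1
  push_cast
  ring

/-- if the (Hermitian, continuous) spectral density `X(ω)` satisfies
`v*X(ω)v ≥ c²‖v‖²` on `[−π,π]`, then the block-Toeplitz matrix built from the
autocovariances `C_{r−s}` satisfies
`Re(Σ_{r,s} u_r* C_{r−s} u_s) ≥ c² Σ_r ‖u_r‖²`. -/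
theorem stmt13 (N p : ℕ) (hN : 1 ≤ N) (hp : 1 ≤ p) (c : ℝ) (hc : 0 < c)
    (X : ℝ → Matrix (Fin N) (Fin N) ℂ)
    (hcont : ∀ i j, ContinuousOn (fun ω => X ω i j) (Set.Icc (-π) π))
    (hherm : ∀ ω ∈ Set.Icc (-π) π, (X ω).IsHermitian)
    (hpos : ∀ ω ∈ Set.Icc (-π) π, ∀ v : Fin N → ℂ,
      c ^ 2 * (∑ i, ‖v i‖ ^ 2) ≤
        (∑ i, ∑ j, (starRingEnd ℂ) (v i) * X ω i j * v j).re)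
    (u : Fin p → Fin N → ℂ) :
    c ^ 2 * (∑ r : Fin p, ∑ i, ‖u r i‖ ^ 2) ≤
      (∑ r : Fin p, ∑ s : Fin p, ∑ i, ∑ j,
        (starRingEnd ℂ) (u r i) * autocov N X ((r : ℤ) - (s : ℤ)) i j * u s j).re := by
  have hle : (-π : ℝ) ≤ π := by linarith [pi_pos]
  have huIcc : Set.uIcc (-π) π = Set.Icc (-π) π := Set.uIcc_of_le hle
  set w : ℝ → Fin N → ℂ := fun ω j =>
    ∑ s : Fin p, Complex.exp (-(Complex.I * (ω : ℂ) * (s : ℂ))) * u s j with hw_def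
  set F : ℝ → ℂ := fun ω =>
    ∑ r : Fin p, ∑ s : Fin p, ∑ i, ∑ j,
      (starRingEnd ℂ) (u r i) *
        (X ω i j * Complex.exp (Complex.I * (ω : ℂ) * ((((r : ℤ) - (s : ℤ)) : ℤ) : ℂ))) *
        u s j with hF_def
  set H : ℝ → ℂ := fun ω =>
    ∑ r : Fin p, ∑ s : Fin p, ∑ i,
      (starRingEnd ℂ) (u r i) * u s i *
        Complex.exp (Complex.I * (ω : ℂ) * ((((r : ℤ) - (s : ℤ)) : ℤ) : ℂ)) with hH_def
  -- continuity facts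
  have hexpc : ∀ k : ℂ, Continuous fun ω : ℝ => Complex.exp (Complex.I * (ω : ℂ) * k) := by
    intro k; exact Complex.continuous_exp.comp (by fun_prop)
  have hexpc' : ∀ k : ℂ, Continuous fun ω : ℝ => Complex.exp (-(Complex.I * (ω : ℂ) * k)) := by
    intro k; exact Complex.continuous_exp.comp (by fun_prop)
  have hwcont : ∀ i, Continuous fun ω => w ω i := by
    intro i
    simp only [hw_def]
    exact continuous_finset_sum _ fun s _ => (hexpc' _).mul continuous_const
  have htermc : ∀ (r s : Fin p) (i j : Fin N),
      ContinuousOn (fun ω : ℝ =>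
        (starRingEnd ℂ) (u r i) *
          (X ω i j * Complex.exp (Complex.I * (ω : ℂ) * ((((r : ℤ) - (s : ℤ)) : ℤ) : ℂ))) *
          u s j) (Set.Icc (-π) π) := by
    intro r s i j
    exact (continuousOn_const.mul ((hcont i j).mul ((hexpc _).continuousOn))).mul
      continuousOn_const
  have hterm_int : ∀ (r s : Fin p) (i j : Fin N),
      IntervalIntegrable (fun ω : ℝ =>
        (starRingEnd ℂ) (u r i) *
          (X ω i j * Complex.exp (Complex.I * (ω : ℂ) * ((((r : ℤ) - (s : ℤ)) : ℤ) : ℂ))) *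
          u s j) MeasureTheory.volume (-π) π := by
    intro r s i j
    apply ContinuousOn.intervalIntegrable
    rw [huIcc]; exact htermc r s i j
  have hFc : ContinuousOn F (Set.Icc (-π) π) := by
    simp only [hF_def]
    apply continuousOn_finset_sum; intro r _
    apply continuousOn_finset_sum; intro s _
    apply continuousOn_finset_sum; intro i _
    apply continuousOn_finset_sum; intro j _
    exact htermc r s i j
  have hF_int : IntervalIntegrable F MeasureTheory.volume (-π) π := by
    apply ContinuousOn.intervalIntegrable; rw [huIcc]; exact hFc
  have hFre_int : IntervalIntegrable (fun ω => (F ω).re) MeasureTheory.volume (-π) π := by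
    apply ContinuousOn.intervalIntegrable; rw [huIcc]
    exact Complex.continuous_re.comp_continuousOn hFc
  -- Step A: the quadratic form equals (1/2π) ∫ F
  have hmain : (∑ r : Fin p, ∑ s : Fin p, ∑ i, ∑ j,
        (starRingEnd ℂ) (u r i) * autocov N X ((r : ℤ) - (s : ℤ)) i j * u s j)
      = (1 / (2 * (π : ℂ))) * ∫ ω in (-π)..π, F ω := by
    have hswap : (∫ ω in (-π)..π, F ω)
        = ∑ r : Fin p, ∑ s : Fin p, ∑ i, ∑ j, ∫ ω in (-π)..π,
            (starRingEnd ℂ) (u r i) *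
              (X ω i j * Complex.exp (Complex.I * (ω : ℂ) * ((((r : ℤ) - (s : ℤ)) : ℤ) : ℂ))) *
              u s j :=
      stmt13_intsum4 _ _ _ hterm_int
    rw [hswap]
    simp only [Finset.mul_sum]
    refine Finset.sum_congr rfl fun r _ => Finset.sum_congr rfl fun s _ =>
      Finset.sum_congr rfl fun i _ => Finset.sum_congr rfl fun j _ => ?_
    simp only [autocov]
    rw [intervalIntegral.integral_mul_const, intervalIntegral.integral_const_mul]
    ring
  -- Step B: pointwise identity F(ω) = w(ω)* X(ω) w(ω)
  have hkey : ∀ ω : ℝ, F ω = ∑ i, ∑ j, (starRingEnd ℂ) (w ω i) * X ω i j * w ω j := by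
    intro ω
    have expand : ∀ i j, (starRingEnd ℂ) (w ω i) * X ω i j * w ω j
        = ∑ r : Fin p, ∑ s : Fin p,
            (starRingEnd ℂ) (u r i) *
              (X ω i j * Complex.exp (Complex.I * (ω : ℂ) * ((((r : ℤ) - (s : ℤ)) : ℤ) : ℂ))) *
              u s j := by
      intro i j
      simp only [hw_def, map_sum, map_mul, Finset.sum_mul, Finset.mul_sum]
      rw [Finset.sum_comm]
      refine Finset.sum_congr rfl fun r _ => Finset.sum_congr rfl fun s _ => ?_
      rw [stmt13_exp_split r s ω]
      ring
    simp only [expand, hF_def]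
    exact stmt13_swap4 (fun (r s : Fin p) (i j : Fin N) =>
        (starRingEnd ℂ) (u r i) *
          (X ω i j * Complex.exp (Complex.I * (ω : ℂ) * ((((r : ℤ) - (s : ℤ)) : ℤ) : ℂ))) *
          u s j)
  -- Step C: pointwise identity for the norm of w
  have hH : ∀ ω : ℝ, ((∑ i, ‖w ω i‖ ^ 2 : ℝ) : ℂ) = H ω := by
    intro ω
    have czz : ∀ z : ℂ, ((‖z‖ ^ 2 : ℝ) : ℂ) = (starRingEnd ℂ) z * z := by
      intro z
      rw [Complex.sq_norm, mul_comm, Complex.mul_conj]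
    push_cast
    have expand : ∀ i, (starRingEnd ℂ) (w ω i) * w ω i
        = ∑ r : Fin p, ∑ s : Fin p,
            (starRingEnd ℂ) (u r i) * u s i *
              Complex.exp (Complex.I * (ω : ℂ) * ((((r : ℤ) - (s : ℤ)) : ℤ) : ℂ)) := by
      intro i
      simp only [hw_def, map_sum, map_mul, Finset.sum_mul, Finset.mul_sum]
      rw [Finset.sum_comm]
      refine Finset.sum_congr rfl fun r _ => Finset.sum_congr rfl fun s _ => ?_
      rw [stmt13_exp_split r s ω]
      ring
    calc (∑ i, ((‖w ω i‖ : ℂ)) ^ 2)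
        = ∑ i, (starRingEnd ℂ) (w ω i) * w ω i := by
          refine Finset.sum_congr rfl fun i _ => ?_
          rw [← czz]; push_cast; ring
      _ = ∑ i, ∑ r : Fin p, ∑ s : Fin p,
            (starRingEnd ℂ) (u r i) * u s i *
              Complex.exp (Complex.I * (ω : ℂ) * ((((r : ℤ) - (s : ℤ)) : ℤ) : ℂ)) := by
          simp only [expand]
      _ = H ω := by
          rw [hH_def]
          exact (stmt13_swap3 (fun r s i =>
            (starRingEnd ℂ) (u r i) * u s i *
              Complex.exp (Complex.I * (ω : ℂ) * ((((r : ℤ) - (s : ℤ)) : ℤ) : ℂ)))).symm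
  -- Step D: ∫ H = 2π Σ_{r,i} conj(u r i) u r i
  have hHterm_int : ∀ (r s : Fin p) (i : Fin N),
      IntervalIntegrable (fun ω : ℝ =>
        (starRingEnd ℂ) (u r i) * u s i *
          Complex.exp (Complex.I * (ω : ℂ) * ((((r : ℤ) - (s : ℤ)) : ℤ) : ℂ)))
        MeasureTheory.volume (-π) π :=
    fun r s i => (continuous_const.mul (hexpc _)).intervalIntegrable _ _
  have hH_int : IntervalIntegrable H MeasureTheory.volume (-π) π := by
    simp only [hH_def]
    exact stmt13_iisum _ _ _ (fun r => stmt13_iisum _ _ _ (fun s =>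
      stmt13_iisum _ _ _ (fun i => hHterm_int r s i)))
  have hcond : ∀ r s : Fin p, ((r : ℤ) - (s : ℤ) = 0) ↔ (s = r) := by
    intro r s
    constructor
    · intro h
      have h2 : (r : ℤ) = (s : ℤ) := by linarith
      exact (Fin.ext (by exact_mod_cast h2)).symm
    · rintro rfl; ring
  have hHint : (∫ ω in (-π)..π, H ω)
      = ((2 * π : ℝ) : ℂ) * ∑ r : Fin p, ∑ i, (starRingEnd ℂ) (u r i) * u r i := by
    have hswap : (∫ ω in (-π)..π, H ω)
        = ∑ r : Fin p, ∑ s : Fin p, ∑ i, ∫ ω in (-π)..π,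
            (starRingEnd ℂ) (u r i) * u s i *
              Complex.exp (Complex.I * (ω : ℂ) * ((((r : ℤ) - (s : ℤ)) : ℤ) : ℂ)) := by
      simp only [hH_def]
      exact stmt13_intsum3 _ _ _ hHterm_int
    rw [hswap]
    have heval : ∀ (r s : Fin p) (i : Fin N),
        (∫ ω in (-π)..π,
            (starRingEnd ℂ) (u r i) * u s i *
              Complex.exp (Complex.I * (ω : ℂ) * ((((r : ℤ) - (s : ℤ)) : ℤ) : ℂ)))
          = (starRingEnd ℂ) (u r i) * u s i *
              (if (r : ℤ) - (s : ℤ) = 0 then (2 * π : ℂ) else 0) := by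
      intro r s i
      rw [intervalIntegral.integral_const_mul, stmt13_orth]
    simp only [heval]
    calc (∑ r : Fin p, ∑ s : Fin p, ∑ i,
            (starRingEnd ℂ) (u r i) * u s i *
              (if (r : ℤ) - (s : ℤ) = 0 then (2 * π : ℂ) else 0))
        = ∑ r : Fin p, ∑ s : Fin p,
            (if s = r then ∑ i, (starRingEnd ℂ) (u r i) * u s i * (2 * π : ℂ) else 0) := by
          refine Finset.sum_congr rfl fun r _ => Finset.sum_congr rfl fun s _ => ?_
          by_cases h : s = r
          · simp [((hcond r s).mpr h), h]
          · have h2 : ¬ ((r : ℤ) - (s : ℤ) = 0) := fun hh => h ((hcond r s).mp hh)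
            simp [h2, h]
      _ = ∑ r : Fin p, ∑ i, (starRingEnd ℂ) (u r i) * u r i * (2 * π : ℂ) := by
          refine Finset.sum_congr rfl fun r _ => ?_
          simp
      _ = ((2 * π : ℝ) : ℂ) * ∑ r : Fin p, ∑ i, (starRingEnd ℂ) (u r i) * u r i := by
          push_cast
          rw [Finset.mul_sum]
          refine Finset.sum_congr rfl fun r _ => ?_
          rw [Finset.mul_sum]
          refine Finset.sum_congr rfl fun i _ => ?_
          ring
  -- Step E: integral of ‖w‖²
  have hnorm_cont : Continuous fun ω => (∑ i, ‖w ω i‖ ^ 2 : ℝ) :=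
    continuous_finset_sum _ fun i _ => (continuous_norm.comp (hwcont i)).pow 2
  have hG_int : IntervalIntegrable (fun ω => c ^ 2 * ∑ i, ‖w ω i‖ ^ 2)
      MeasureTheory.volume (-π) π :=
    (continuous_const.mul hnorm_cont).intervalIntegrable _ _
  have hlow : ∀ ω ∈ Set.Icc (-π) π,
      c ^ 2 * ∑ i, ‖w ω i‖ ^ 2 ≤ (F ω).re := by
    intro ω hω
    rw [hkey ω]
    exact hpos ω hω (w ω)
  have hmono : (∫ ω in (-π)..π, c ^ 2 * ∑ i, ‖w ω i‖ ^ 2)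
      ≤ ∫ ω in (-π)..π, (F ω).re :=
    intervalIntegral.integral_mono_on hle hG_int hFre_int hlow
  have hGval : (∫ ω in (-π)..π, (∑ i, ‖w ω i‖ ^ 2 : ℝ))
      = 2 * π * ∑ r : Fin p, ∑ i, ‖u r i‖ ^ 2 := by
    have h1 : ∀ ω : ℝ, (∑ i, ‖w ω i‖ ^ 2 : ℝ) = (H ω).re := by
      intro ω; rw [← hH ω, Complex.ofReal_re]
    simp only [h1]
    have h2 : (∫ ω in (-π)..π, (H ω).re) = (∫ ω in (-π)..π, H ω).re := by
      simpa using Complex.reCLM.intervalIntegral_comp_comm hH_int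
    rw [h2, hHint, Complex.re_ofReal_mul]
    congr 1
    rw [Complex.re_sum]
    refine Finset.sum_congr rfl fun r _ => ?_
    rw [Complex.re_sum]
    refine Finset.sum_congr rfl fun i _ => ?_
    rw [mul_comm, Complex.mul_conj, Complex.sq_norm, Complex.ofReal_re]
  -- Final assembly
  rw [hmain]
  rw [show (1 / (2 * (π : ℂ))) = ((1 / (2 * π) : ℝ) : ℂ) by push_cast; ring,
    Complex.re_ofReal_mul]
  have hre : (∫ ω in (-π)..π, F ω).re = ∫ ω in (-π)..π, (F ω).re := by
    simpa using (Complex.reCLM.intervalIntegral_comp_comm hF_int).symm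
  rw [hre]
  have hGint_val : (∫ ω in (-π)..π, c ^ 2 * ∑ i, ‖w ω i‖ ^ 2)
      = c ^ 2 * (2 * π * ∑ r : Fin p, ∑ i, ‖u r i‖ ^ 2) := by
    rw [intervalIntegral.integral_const_mul, hGval]
  have hπ : (0:ℝ) < π := pi_pos
  calc c ^ 2 * (∑ r : Fin p, ∑ i, ‖u r i‖ ^ 2)
      = (1 / (2 * π)) * (c ^ 2 * (2 * π * ∑ r : Fin p, ∑ i, ‖u r i‖ ^ 2)) := by
        field_simp
    _ ≤ (1 / (2 * π)) * ∫ ω in (-π)..π, (F ω).re := by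
        apply mul_le_mul_of_nonneg_left _ (by positivity)
        rw [← hGint_val]
        exact hmono
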